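/- Assume the operators ∇_1,…,∇_r pairwise commute (flatness) and that ∇_i^p = 0 as an operator on R^N for every i (vanishing p-curvature). Then for every constant vector F₀ ∈ k^N, the vector F := (−1)^r · (∇_1^{p−1} ∘ ∇_2^{p−1} ∘ ⋯ ∘ ∇_r^{p−1}) ( (Π_{i=1}^{r} x_i^{p−1}) · F₀ ) ∈ R^N (the order of composition is irrelevant since the operators commute) is a flat section with prescribed value at the origin: ∇_i F = 0 for all i ∈ Fin r, and evaluating every entry of F at x = (0,…,0) gives F₀. -/

import Mathlib

open MvPolynomial Matrix

section Aux

variable {k : Type} [CommRing k] {r : ℕ}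

/-- every monomial occurring in `f` has degree at least `n` in the variable `j`. -/
def MinDeg (j : Fin r) (n : ℕ) (f : MvPolynomial (Fin r) k) : Prop :=
  ∀ m ∈ f.support, n ≤ m j

theorem minDeg_zero (j : Fin r) (n : ℕ) : MinDeg j n (0 : MvPolynomial (Fin r) k) := by
  intro m hm; simp at hm

theorem minDeg_mono {j : Fin r} {n n' : ℕ} {f : MvPolynomial (Fin r) k} (h : n' ≤ n)
    (hf : MinDeg j n f) : MinDeg j n' f := fun m hm => le_trans h (hf m hm)

theorem minDeg_add {j : Fin r} {n : ℕ} {f g : MvPolynomial (Fin r) k} (hf : MinDeg j n f)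
    (hg : MinDeg j n g) : MinDeg j n (f + g) := by
  classical
  intro m hm
  rcases Finset.mem_union.1 (MvPolynomial.support_add hm) with h | h
  · exact hf m h
  · exact hg m h

theorem minDeg_neg {j : Fin r} {n : ℕ} {f : MvPolynomial (Fin r) k} (hf : MinDeg j n f) :
    MinDeg j n (-f) := by
  intro m hm
  exact hf m (by rwa [MvPolynomial.support_neg] at hm)

theorem minDeg_sub {j : Fin r} {n : ℕ} {f g : MvPolynomial (Fin r) k} (hf : MinDeg j n f)
    (hg : MinDeg j n g) : MinDeg j n (f - g) := by
  rw [sub_eq_add_neg]; exact minDeg_add hf (minDeg_neg hg)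

theorem minDeg_sum {α : Type*} {j : Fin r} {n : ℕ} {s : Finset α}
    {f : α → MvPolynomial (Fin r) k} (hf : ∀ a ∈ s, MinDeg j n (f a)) :
    MinDeg j n (∑ a ∈ s, f a) :=
  Finset.sum_induction f (MinDeg j n) (fun _ _ => minDeg_add) (minDeg_zero j n) hf

theorem minDeg_mul_left {j : Fin r} {n : ℕ} {g f : MvPolynomial (Fin r) k}
    (hf : MinDeg j n f) : MinDeg j n (g * f) := by
  classical
  intro m hm
  obtain ⟨m₁, _, m₂, h₂, rfl⟩ := Finset.mem_add.1 (MvPolynomial.support_mul g f hm)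
  calc n ≤ m₂ j := hf m₂ h₂
    _ ≤ (m₁ + m₂) j := by simp

theorem minDeg_monomial {j : Fin r} {n : ℕ} (s : Fin r →₀ ℕ) (c : k) (h : n ≤ s j) :
    MinDeg j n (monomial s c) := by
  intro m hm
  have := MvPolynomial.support_monomial_subset hm
  rw [Finset.mem_singleton] at this
  subst this
  exact h

theorem minDeg_pderiv_same {j : Fin r} {n : ℕ} {f : MvPolynomial (Fin r) k}
    (hf : MinDeg j n f) : MinDeg j (n - 1) (pderiv j f) := by
  have h1 : pderiv j f
      = ∑ m ∈ f.support, monomial (m - Finsupp.single j 1) (MvPolynomial.coeff m f * m j) := by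
    conv_lhs => rw [f.as_sum]
    rw [map_sum]
    simp [pderiv_monomial]
  rw [h1]
  apply minDeg_sum
  intro m hm
  apply minDeg_monomial
  rw [Finsupp.tsub_apply, Finsupp.single_eq_same]
  exact Nat.sub_le_sub_right (hf m hm) 1

theorem minDeg_pderiv_other {i j : Fin r} (hij : i ≠ j) {n : ℕ} {f : MvPolynomial (Fin r) k}
    (hf : MinDeg j n f) : MinDeg j n (pderiv i f) := by
  have h1 : pderiv i f
      = ∑ m ∈ f.support, monomial (m - Finsupp.single i 1) (MvPolynomial.coeff m f * m i) := by
    conv_lhs => rw [f.as_sum]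
    rw [map_sum]
    simp [pderiv_monomial]
  rw [h1]
  apply minDeg_sum
  intro m hm
  apply minDeg_monomial
  rw [Finsupp.tsub_apply, Finsupp.single_eq_of_ne' hij]
  simpa using hf m hm

theorem minDeg_pderiv_same_iter {j : Fin r} {n : ℕ} (m : ℕ) {f : MvPolynomial (Fin r) k}
    (hf : MinDeg j n f) : MinDeg j (n - m) ((pderiv j)^[m] f) := by
  induction m with
  | zero => simpa using hf
  | succ m ih =>
    rw [Function.iterate_succ_apply']
    have := minDeg_pderiv_same ih
    rwa [Nat.sub_sub] at this

theorem minDeg_pderiv_other_iter {i j : Fin r} (hij : i ≠ j) {n : ℕ} (m : ℕ)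
    {f : MvPolynomial (Fin r) k} (hf : MinDeg j n f) : MinDeg j n ((pderiv i)^[m] f) := by
  induction m with
  | zero => simpa using hf
  | succ m ih =>
    rw [Function.iterate_succ_apply']
    exact minDeg_pderiv_other hij ih

theorem iterate_pderiv_monomial {i : Fin r} (s : Fin r →₀ ℕ) (a : k) :
    ∀ n, n ≤ s i →
      (pderiv i)^[n] (monomial s a) =
        monomial (s - Finsupp.single i n) (a * ((s i).descFactorial n : k))
  | 0, _ => by simp
  | n + 1, h => by
    rw [Function.iterate_succ_apply',
      iterate_pderiv_monomial s a n (Nat.le_of_succ_le h), pderiv_monomial]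
    have h1 : (s - Finsupp.single i n) i = s i - n := by
      rw [Finsupp.tsub_apply, Finsupp.single_eq_same]
    rw [h1]
    congr 1
    · rw [tsub_tsub, ← Finsupp.single_add]
    · rw [Nat.descFactorial_succ]
      push_cast
      ring

end Aux

section Fold

variable {ι V : Type*}

/-- fold a family of operators over a list. -/
def foldC (T : ι → V → V) (L : List ι) : V → V := L.foldr (fun i f => T i ∘ f) id

theorem foldC_cons (T : ι → V → V) (i : ι) (L : List ι) (v : V) :
    foldC T (i :: L) v = T i (foldC T L v) := rfl

theorem foldC_comm {S : V → V} (T : ι → V → V) (hST : ∀ i v, S (T i v) = T i (S v)) :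
    ∀ (L : List ι) (v : V), S (foldC T L v) = foldC T L (S v)
  | [], _ => rfl
  | i :: L, v => by
    rw [foldC_cons, hST, foldC_comm T hST L, foldC_cons]

theorem foldC_fixed {z : V} (T : ι → V → V) (hz : ∀ i, T i z = z) :
    ∀ L : List ι, foldC T L z = z
  | [] => rfl
  | i :: L => by rw [foldC_cons, foldC_fixed T hz L, hz i]

theorem foldC_append (T : ι → V → V) (s t : List ι) (v : V) :
    foldC T (s ++ t) v = foldC T s (foldC T t v) := by
  induction s with
  | nil => rfl
  | cons i s ih => rw [List.cons_append, foldC_cons, foldC_cons, ih]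

theorem sum_map_apply [AddCommMonoid V] (S : V → V) (h0 : S 0 = 0)
    (hadd : ∀ u v, S (u + v) = S u + S v) : ∀ l : List V, S l.sum = (l.map S).sum
  | [] => by simpa using h0
  | v :: l => by
    rw [List.sum_cons, hadd, List.map_cons, List.sum_cons, sum_map_apply S h0 hadd l]

theorem list_sum_apply {α β : Type*} [AddCommMonoid β] :
    ∀ (l : List (α → β)) (a : α), l.sum a = (l.map (fun f => f a)).sum
  | [], _ => rfl
  | f :: l, a => by
    rw [List.sum_cons, List.map_cons, List.sum_cons, Pi.add_apply, list_sum_apply l a]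

end Fold

/-- Given commuting connection operators `∇_i v = ∂_i v − B_i · v` on `R^N`,
`R = k[x_1,…,x_r]`, `char k = p`, with vanishing `p`-curvature (`∇_i^p = 0`), the
explicit vector `F = (−1)^r ∇_1^{p−1}⋯∇_r^{p−1}((Π_i x_i^{p−1})·F₀)` is a flat section
with `F(0) = F₀`. -/
theorem flat_section_formula
    {p : ℕ} [Fact p.Prime] {k : Type} [Field k] [CharP k p] {N r : ℕ} (hr : 1 ≤ r)
    (B : Fin r → Matrix (Fin N) (Fin N) (MvPolynomial (Fin r) k))
    (D : Fin r → (Fin N → MvPolynomial (Fin r) k) → (Fin N → MvPolynomial (Fin r) k))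
    (hD : ∀ i v, D i v = fun a => pderiv i (v a) - (B i *ᵥ v) a)
    (hflat : ∀ i l v, D i (D l v) = D l (D i v))
    (hnilp : ∀ (i : Fin r) (v : Fin N → MvPolynomial (Fin r) k), (D i)^[p] v = 0)
    (F₀ : Fin N → k)
    (F : Fin N → MvPolynomial (Fin r) k)
    (hF : F = ((-1 : MvPolynomial (Fin r) k) ^ r) •
      ((List.finRange r).foldr (fun i f => (D i)^[p-1] ∘ f) id)
        (fun a => (∏ i : Fin r, (X i : MvPolynomial (Fin r) k) ^ (p - 1)) *
          MvPolynomial.C (F₀ a))) :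
    (∀ i : Fin r, D i F = 0) ∧
    (∀ a : Fin N, MvPolynomial.eval (fun _ => (0 : k)) (F a) = F₀ a) := by
  classical
  have hp2 : 2 ≤ p := (Fact.out : p.Prime).two_le
  have hp1 : p - 1 + 1 = p := by omega
  -- notations
  set T : Fin r → (Fin N → MvPolynomial (Fin r) k) → (Fin N → MvPolynomial (Fin r) k) :=
    fun i => (D i)^[p-1] with hT
  have hfoldT : ((List.finRange r).foldr (fun i f => (D i)^[p-1] ∘ f) id)
      = foldC T (List.finRange r) := rfl
  -- basic algebraic facts about D
  have hDadd : ∀ i (u v : Fin N → MvPolynomial (Fin r) k), D i (u + v) = D i u + D i v := by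
    intro i u v
    funext a
    simp only [hD, Pi.add_apply, Matrix.mulVec_add, map_add]
    ring
  have hDzero : ∀ i, D i (0 : Fin N → MvPolynomial (Fin r) k) = 0 := by
    intro i
    funext a
    simp [hD]
  have hDit_zero : ∀ i n, (D i)^[n] (0 : Fin N → MvPolynomial (Fin r) k) = 0 := by
    intro i n
    induction n with
    | zero => rfl
    | succ n ih => rw [Function.iterate_succ_apply', ih, hDzero]
  have hDit_add : ∀ i n (u v : Fin N → MvPolynomial (Fin r) k),
      (D i)^[n] (u + v) = (D i)^[n] u + (D i)^[n] v := by
    intro i n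
    induction n with
    | zero => intro u v; rfl
    | succ n ih =>
      intro u v
      rw [Function.iterate_succ_apply', Function.iterate_succ_apply',
        Function.iterate_succ_apply', ih, hDadd]
  have hcomm_it : ∀ i j n (v : Fin N → MvPolynomial (Fin r) k),
      D i ((D j)^[n] v) = (D j)^[n] (D i v) := by
    intro i j n
    induction n with
    | zero => intro v; rfl
    | succ n ih =>
      intro v
      rw [Function.iterate_succ_apply, Function.iterate_succ_apply, ih, hflat]
  -- Part 1 : flatness
  have hDsmul : ∀ i (v : Fin N → MvPolynomial (Fin r) k),
      D i (((-1 : MvPolynomial (Fin r) k) ^ r) • v)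
        = ((-1 : MvPolynomial (Fin r) k) ^ r) • D i v := by
    intro i v
    have hc : ((-1 : MvPolynomial (Fin r) k) ^ r) = C ((-1 : k) ^ r) := by
      rw [← _root_.map_one (C : k →+* MvPolynomial (Fin r) k), ← map_neg, ← map_pow]
    funext a
    simp only [hD, Pi.smul_apply, smul_eq_mul, Matrix.mulVec_smul, hc, pderiv_C_mul]
    ring
  have part1 : ∀ i : Fin r, D i F = 0 := by
    intro i
    obtain ⟨s, t, hst⟩ := List.append_of_mem (List.mem_finRange i)
    have hinner : ∀ v : Fin N → MvPolynomial (Fin r) k,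
        D i (foldC T (List.finRange r) v) = 0 := by
      intro v
      rw [hst, foldC_append, foldC_comm T (fun j w => hcomm_it i j (p-1) w) s, foldC_cons]
      have hz : D i (T i (foldC T t v)) = 0 := by
        show D i ((D i)^[p-1] (foldC T t v)) = 0
        have hpp : D i ((D i)^[p-1] (foldC T t v)) = (D i)^[p] (foldC T t v) := by
          conv_rhs => rw [← hp1]
          rw [Function.iterate_succ_apply' (D i) (p-1)]
        rw [hpp, hnilp]
      rw [hz]
      exact foldC_fixed T (fun j => hDit_zero j (p-1)) s
    rw [hF, hfoldT, hDsmul, hinner, smul_zero]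
  refine ⟨part1, ?_⟩
  -- Part 2 : value at the origin
  -- degree preservation facts
  have hBv : ∀ (i : Fin r) (j : Fin r) (n : ℕ) (v : Fin N → MvPolynomial (Fin r) k),
      (∀ a, MinDeg j n (v a)) → ∀ a, MinDeg j n ((B i *ᵥ v) a) := by
    intro i j n v hv a
    have : (B i *ᵥ v) a = ∑ b : Fin N, B i a b * v b := by
      simp [Matrix.mulVec, dotProduct]
    rw [this]
    exact minDeg_sum fun b _ => minDeg_mul_left (hv b)
  have hDpres : ∀ (i j : Fin r), i ≠ j → ∀ (n : ℕ) (v : Fin N → MvPolynomial (Fin r) k),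
      (∀ a, MinDeg j n (v a)) → ∀ a, MinDeg j n (D i v a) := by
    intro i j hij n v hv a
    simp only [hD]
    exact minDeg_sub (minDeg_pderiv_other hij (hv a)) (hBv i j n v hv a)
  have hDpres_it : ∀ (i j : Fin r), i ≠ j → ∀ (n m : ℕ) (v : Fin N → MvPolynomial (Fin r) k),
      (∀ a, MinDeg j n (v a)) → ∀ a, MinDeg j n ((D i)^[m] v a) := by
    intro i j hij n m
    induction m with
    | zero => intro v hv a; simpa using hv a
    | succ m ih =>
      intro v hv a
      rw [Function.iterate_succ_apply']
      exact hDpres i j hij n _ (ih v hv) a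
  -- the key decomposition lemma for a single operator
  have hC : ∀ (i : Fin r) (d : ℕ) (v : Fin N → MvPolynomial (Fin r) k),
      (∀ a, MinDeg i d (v a)) → ∀ n : ℕ, n ≤ d →
      ∃ E : Fin N → MvPolynomial (Fin r) k,
        (D i)^[n] v = (fun a => (pderiv i)^[n] (v a)) + E ∧
        ∀ a, MinDeg i (d - n + 1) (E a) := by
    intro i d v hv n
    induction n with
    | zero =>
      exact fun _ => ⟨0, by funext a; simp, fun a => minDeg_zero _ _⟩
    | succ n ih =>
      intro hnd
      obtain ⟨E, hEeq, hEdeg⟩ := ih (Nat.le_of_succ_le hnd)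
      have hu : ∀ a, MinDeg i (d - n) ((pderiv i)^[n] (v a)) :=
        fun a => minDeg_pderiv_same_iter n (hv a)
      refine ⟨fun a => pderiv i (E a)
          - (B i *ᵥ ((fun b => (pderiv i)^[n] (v b)) + E)) a, ?_, ?_⟩
      · rw [Function.iterate_succ_apply', hEeq]
        funext a
        simp only [hD, Pi.add_apply, map_add, Function.iterate_succ_apply']
        ring
      · intro a
        have heq2 : d - (n + 1) + 1 = d - n := by omega
        rw [heq2]
        apply minDeg_sub
        · have h2 := minDeg_pderiv_same (hEdeg a)
          rwa [Nat.add_sub_cancel] at h2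
        · apply hBv i i (d - n) _ _ a
          intro b
          simp only [Pi.add_apply]
          exact minDeg_add (hu b) (minDeg_mono (by omega) (hEdeg b))
  -- main decomposition over a list of indices
  have hmain : ∀ L : List (Fin r), L.Nodup →
      ∀ v : Fin N → MvPolynomial (Fin r) k,
        (∀ j ∈ L, ∀ a, MinDeg j (p-1) (v a)) →
        ∃ e : Fin r → Fin N → MvPolynomial (Fin r) k,
          (∀ j a, MinDeg j 1 (e j a)) ∧
          foldC T L v
            = (fun a => L.foldr (fun i g => (pderiv i)^[p-1] g) (v a)) + (L.map e).sum := by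
    intro L
    induction L with
    | nil =>
      intro _ v _
      exact ⟨fun _ => 0, fun j a => minDeg_zero _ _, by funext a; simp [foldC]⟩
    | cons i L ih =>
      intro hnd v hv
      have hiL : i ∉ L := (List.nodup_cons.1 hnd).1
      obtain ⟨e', he'deg, he'eq⟩ := ih (List.nodup_cons.1 hnd).2 v
        (fun j hj a => hv j (List.mem_cons_of_mem i hj) a)
      -- the pure-derivative part after processing L
      have hufold : ∀ a, MinDeg i (p-1) (L.foldr (fun i g => (pderiv i)^[p-1] g) (v a)) := by
        intro a
        have : ∀ (L' : List (Fin r)), i ∉ L' → ∀ f : MvPolynomial (Fin r) k,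
            MinDeg i (p-1) f → MinDeg i (p-1) (L'.foldr (fun i g => (pderiv i)^[p-1] g) f) := by
          intro L'
          induction L' with
          | nil => intro _ f hf; simpa using hf
          | cons l L' ih2 =>
            intro hl f hf
            rw [List.foldr_cons]
            exact minDeg_pderiv_other_iter
              (fun h => hl (by rw [← h]; exact List.mem_cons_self)) (p-1)
              (ih2 (fun h => hl (List.mem_cons_of_mem l h)) f hf)
        exact this L hiL (v a) (hv i List.mem_cons_self a)
      obtain ⟨Ei, hEi_eq, hEi_deg⟩ :=
        hC i (p-1) (fun a => L.foldr (fun i g => (pderiv i)^[p-1] g) (v a)) hufold (p-1) (le_refl _)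
      have hEi_deg1 : ∀ a, MinDeg i 1 (Ei a) := by
        intro a
        have := hEi_deg a
        rwa [Nat.sub_self] at this
      set e : Fin r → Fin N → MvPolynomial (Fin r) k :=
        fun j => if j = i then Ei else (D i)^[p-1] (e' j) with he
      refine ⟨e, ?_, ?_⟩
      · intro j a
        by_cases hji : j = i
        · subst hji; simp only [he, if_pos rfl]; exact hEi_deg1 a
        · simp only [he, if_neg hji]
          exact hDpres_it i j (fun h => hji h.symm) 1 (p-1) (e' j) (he'deg j) a
      · rw [foldC_cons, he'eq]
        simp only [hT]
        rw [hDit_add, hEi_eq]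
        have hmap : L.map e = L.map ((D i)^[p-1] ∘ e') := by
          apply List.map_congr_left
          intro j hj
          have hji : j ≠ i := fun h => hiL (h ▸ hj)
          simp only [he, Function.comp_apply, if_neg hji]
        have hei : e i = Ei := by simp only [he, if_pos rfl]
        have hsum : (D i)^[p-1] ((L.map e').sum) = (L.map ((D i)^[p-1] ∘ e')).sum := by
          rw [sum_map_apply ((D i)^[p-1]) (hDit_zero i (p-1)) (hDit_add i (p-1)),
            List.map_map]
        rw [List.map_cons, List.sum_cons, hei, hmap, ← hsum]
        funext a
        simp only [Pi.add_apply, List.foldr_cons]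
        ring
  -- description of the starting vector as a monomial
  set sbar : Fin r →₀ ℕ := ∑ j : Fin r, Finsupp.single j (p-1) with hsbardef
  have hsbar : ∀ j, sbar j = p - 1 := by
    intro j
    rw [hsbardef, Finsupp.finset_sum_apply]
    rw [Finset.sum_eq_single j (fun b _ hb => Finsupp.single_eq_of_ne' hb) (by simp)]
    exact Finsupp.single_eq_same
  have hsupp : sbar.support = Finset.univ := by
    ext j
    rw [Finsupp.mem_support_iff, hsbar]
    simp only [Finset.mem_univ, iff_true]
    omega
  have hw : ∀ c : k, (∏ i : Fin r, (X i : MvPolynomial (Fin r) k) ^ (p - 1)) * C c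
      = monomial sbar c := by
    intro c
    have h1 : (∏ i : Fin r, (X i : MvPolynomial (Fin r) k) ^ (p - 1))
        = monomial sbar 1 := by
      rw [← prod_X_pow_eq_monomial, hsupp]
      exact Finset.prod_congr rfl (fun i _ => by rw [hsbar])
    rw [h1, C_apply, monomial_mul, add_zero, one_mul]
  -- the pure derivative fold of a monomial
  have hpure : ∀ L : List (Fin r), L.Nodup → ∀ (s : Fin r →₀ ℕ) (c : k),
      (∀ j ∈ L, s j = p - 1) →
      L.foldr (fun i g => (pderiv i)^[p-1] g) (monomial s c) =
        monomial (s - ∑ j ∈ L.toFinset, Finsupp.single j (p-1))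
          (c * ((Nat.factorial (p-1) : k)) ^ L.length) := by
    intro L
    induction L with
    | nil => intro _ s c _; simp
    | cons i L ih =>
      intro hnd s c hs
      have hiL : i ∉ L := (List.nodup_cons.1 hnd).1
      rw [List.foldr_cons, ih (List.nodup_cons.1 hnd).2 s c
        (fun j hj => hs j (List.mem_cons_of_mem i hj))]
      have hs'i : (s - ∑ j ∈ L.toFinset, Finsupp.single j (p-1)) i = p - 1 := by
        rw [Finsupp.tsub_apply, Finsupp.finset_sum_apply]
        have h0 : (∑ j ∈ L.toFinset, (Finsupp.single j (p-1)) i) = 0 := by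
          apply Finset.sum_eq_zero
          intro j hj
          exact Finsupp.single_eq_of_ne (fun h => hiL (h ▸ List.mem_toFinset.1 hj))
        rw [h0, hs i List.mem_cons_self, Nat.sub_zero]
      rw [iterate_pderiv_monomial _ _ _ (le_of_eq hs'i.symm), hs'i,
        Nat.descFactorial_self]
      congr 1
      · rw [tsub_tsub, List.toFinset_cons, Finset.sum_insert (by simpa using hiL),
          add_comm (Finsupp.single i (p-1))]
      · rw [List.length_cons, pow_succ]
        ring
  -- put everything together
  intro a
  have hvdeg : ∀ j ∈ List.finRange r, ∀ b,
      MinDeg j (p-1) ((fun b => (∏ i : Fin r, (X i : MvPolynomial (Fin r) k) ^ (p - 1)) *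
        MvPolynomial.C (F₀ b)) b) := by
    intro j _ b
    simp only [hw]
    exact minDeg_monomial sbar (F₀ b) (le_of_eq (hsbar j).symm)
  obtain ⟨e, hedeg, heq⟩ := hmain (List.finRange r) (List.nodup_finRange r) _ hvdeg
  have hpure' : (List.finRange r).foldr (fun i g => (pderiv i)^[p-1] g)
      ((fun b => (∏ i : Fin r, (X i : MvPolynomial (Fin r) k) ^ (p - 1)) *
        MvPolynomial.C (F₀ b)) a)
      = monomial 0 (F₀ a * ((Nat.factorial (p-1) : k)) ^ r) := by
    simp only [hw]
    rw [hpure (List.finRange r) (List.nodup_finRange r) sbar (F₀ a)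
      (fun j _ => hsbar j)]
    rw [List.toFinset_finRange, ← hsbardef, tsub_self, List.length_finRange]
  have hfact : ((Nat.factorial (p-1) : k)) = -1 := by
    have h1 : ((Nat.factorial (p-1) : ℕ) : ZMod p) = -1 := ZMod.wilsons_lemma p
    calc ((Nat.factorial (p-1) : ℕ) : k) = ZMod.castHom (dvd_refl p) k ((Nat.factorial (p-1) : ℕ) : ZMod p) := by
          rw [map_natCast]
      _ = -1 := by rw [h1, map_neg, _root_.map_one]
  have hEval0 : ∀ (j : Fin r) (b : Fin N),
      MvPolynomial.eval (fun _ => (0 : k)) (e j b) = 0 := by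
    intro j b
    rw [eval_zero', constantCoeff_eq]
    by_contra h
    have := hedeg j b 0 (MvPolynomial.mem_support_iff.2 h)
    simp at this
  rw [hF, hfoldT]
  rw [heq]
  simp only [Pi.smul_apply, Pi.add_apply, smul_eq_mul]
  rw [_root_.map_mul, map_add]
  rw [hpure']
  have hsumzero : MvPolynomial.eval (fun _ => (0 : k))
      (((List.finRange r).map e).sum a) = 0 := by
    rw [list_sum_apply, map_list_sum]
    apply List.sum_eq_zero
    intro x hx
    simp only [List.map_map, List.mem_map] at hx
    obtain ⟨j, _, rfl⟩ := hx
    exact hEval0 j a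
  rw [hsumzero, add_zero]
  rw [map_pow, map_neg, _root_.map_one, eval_monomial]
  rw [hfact]
  simp only [Finsupp.prod_zero_index]
  have hone : (-1:k)^r * (-1:k)^r = 1 := by
    rw [← mul_pow]; norm_num
  linear_combination F₀ a * hone
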